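/- arXiv:2205.06790 — 3 statements merged into one kernel-verified Lean document; each statement's English description precedes it below -/
import Mathlib

section
/- For any continuous K-algebra endomorphism α of K[[x_1,...,x_n]] (continuous in the m-adic topology), the operator P_α = Σ_{i≥0} (1/i!) u^i ∂^i, where u_j = α(x_j) − x_j ∈ m, belongs to D̂_n^sym and satisfies P_α(f) = f(x_1+u_1, ..., x_n+u_n) = α(f) for every f ∈ K[[x_1,...,x_n]]. In particular every continuous K-algebra endomorphism of K[[x_1,...,x_n]] is realized by an operator of D̂_n^sym. -/
/-!
STATEMENT 3: Every continuous K-algebra endomorphism `α` of `K[[x₁,…,xₙ]]`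
(continuity in the m-adic topology, encoded by the substitution formula
`α f = f(α x₁, …, α xₙ)` together with `α xᵢ ∈ m`) is realized by the operator
`P_α = Σ_i (1/i!) u^i ∂^i ∈ D̂ₙ^sym`, where `u_j = α(x_j) − x_j`:
`P_α` has finite order and `P_α(f) = α(f)` for all `f`.
-/

open MvPowerSeries

noncomputable section

variable {K : Type*} [Field K] [CharZero K] {n : ℕ}

def dg {n : ℕ} (k : Fin n → ℕ) : ℕ := ∑ i, k i

def dgF {n : ℕ} (μ : Fin n →₀ ℕ) : ℕ := μ.sum fun _ e => e

abbrev Op (n : ℕ) (K : Type*) [Field K] := (Fin n → ℕ) → MvPowerSeries (Fin n) K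

def ord (P : Op n K) : EReal :=
  ⨆ (k : Fin n → ℕ) (μ : Fin n →₀ ℕ) (_ : MvPowerSeries.coeff (R := K) μ (P k) ≠ 0),
    ((((dg k : ℤ) - (dgF μ : ℤ) : ℤ) : ℝ) : EReal)

/-- the iterated partial derivative `∂^j` -/
def Dmulti (j : Fin n → ℕ) (b : MvPowerSeries (Fin n) K) : MvPowerSeries (Fin n) K :=
  fun ν => (∏ i, (((ν i + j i).factorial / (ν i).factorial : ℕ) : K)) *
    MvPowerSeries.coeff (R := K) (ν + Finsupp.equivFunOnFinite.symm j) b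

/-- the action of an operator on a power series: `P(f) = Σ_k a_k ∂^k f`
(computed coefficientwise, where the sum is m-adically convergent). -/
def opApply (P : Op n K) (f : MvPowerSeries (Fin n) K) : MvPowerSeries (Fin n) K :=
  fun μ => ∑ᶠ (k : Fin n → ℕ), MvPowerSeries.coeff (R := K) μ (P k * Dmulti k f)

/-- substitution of power series with zero constant term:
`f ↦ f(u₁,…,uₙ)`, computed coefficientwise. -/
def substF (u : Fin n → MvPowerSeries (Fin n) K) (f : MvPowerSeries (Fin n) K) :
    MvPowerSeries (Fin n) K :=
  fun μ => ∑ᶠ (p : Fin n → ℕ),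
    MvPowerSeries.coeff (R := K) (Finsupp.equivFunOnFinite.symm p) f *
      MvPowerSeries.coeff (R := K) μ (∏ i, (u i) ^ (p i))

/-- the operator `P_α = Σ_k (1/k!) u^k ∂^k` with `u_j = α(x_j) − x_j`. -/
def Palpha (α : MvPowerSeries (Fin n) K →ₐ[K] MvPowerSeries (Fin n) K) : Op n K :=
  fun k => ((∏ i, ((k i).factorial) : ℕ) : K)⁻¹ •
    ∏ i, (α (MvPowerSeries.X i) - MvPowerSeries.X i) ^ (k i)

def eS {n : ℕ} (k : Fin n → ℕ) : Fin n →₀ ℕ := Finsupp.equivFunOnFinite.symm k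

@[simp] lemma eS_apply (k : Fin n → ℕ) (i : Fin n) : eS k i = k i := rfl

lemma eS_def (k : Fin n → ℕ) : Finsupp.equivFunOnFinite.symm k = eS k := rfl

lemma eS_coe (t : Fin n →₀ ℕ) : eS ⇑t = t := Finsupp.equivFunOnFinite_symm_coe t

lemma dgF_eq (μ : Fin n →₀ ℕ) : dgF μ = ∑ i, μ i :=
  Finsupp.sum_fintype _ _ fun _ => rfl

lemma apply_le_dgF (μ : Fin n →₀ ℕ) (i : Fin n) : μ i ≤ dgF μ := by
  rw [dgF_eq]; exact Finset.single_le_sum (fun j _ => Nat.zero_le _) (Finset.mem_univ i)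

lemma apply_le_dg (k : Fin n → ℕ) (i : Fin n) : k i ≤ dg k :=
  Finset.single_le_sum (fun j _ => Nat.zero_le _) (Finset.mem_univ i)

lemma dgF_add (a b : Fin n →₀ ℕ) : dgF (a + b) = dgF a + dgF b := by
  simp [dgF_eq, Finsupp.add_apply, Finset.sum_add_distrib]

def OrdGe (d : ℕ) (φ : MvPowerSeries (Fin n) K) : Prop :=
  ∀ μ : Fin n →₀ ℕ, dgF μ < d → MvPowerSeries.coeff (R := K) μ φ = 0

lemma ordGe_zero (φ : MvPowerSeries (Fin n) K) : OrdGe 0 φ := fun _ h => absurd h (Nat.not_lt_zero _)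

lemma ordGe_mul {d e : ℕ} {φ ψ : MvPowerSeries (Fin n) K} (hφ : OrdGe d φ) (hψ : OrdGe e ψ) :
    OrdGe (d + e) (φ * ψ) := by
  intro μ h
  classical
  rw [MvPowerSeries.coeff_mul]
  refine Finset.sum_eq_zero fun x hx => ?_
  rw [Finset.HasAntidiagonal.mem_antidiagonal] at hx
  have hsum : dgF x.1 + dgF x.2 = dgF μ := by rw [← dgF_add, hx]
  rcases lt_or_ge (dgF x.1) d with h1 | h1
  · rw [hφ _ h1, zero_mul]
  · rw [hψ _ (by omega), mul_zero]

lemma ordGe_one {φ : MvPowerSeries (Fin n) K} (h : MvPowerSeries.constantCoeff (σ := Fin n) (R := K) φ = 0) :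
    OrdGe 1 φ := by
  intro μ hμ
  have h0 : ∑ i, μ i = 0 := by have := dgF_eq μ; omega
  have hμ0 : μ = 0 := by
    ext i
    simpa using Finset.sum_eq_zero_iff.mp h0 i (Finset.mem_univ i)
  rw [hμ0, MvPowerSeries.coeff_zero_eq_constantCoeff]
  exact h

lemma ordGe_pow {φ : MvPowerSeries (Fin n) K} (h : OrdGe 1 φ) (m : ℕ) : OrdGe m (φ ^ m) := by
  induction m with
  | zero => exact ordGe_zero _
  | succ m ih => rw [pow_succ]; exact ordGe_mul ih h

lemma ordGe_prod (u : Fin n → MvPowerSeries (Fin n) K)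
    (hu : ∀ i, MvPowerSeries.constantCoeff (σ := Fin n) (R := K) (u i) = 0) (k : Fin n → ℕ) :
    OrdGe (dg k) (∏ i, u i ^ k i) := by
  have H : ∀ s : Finset (Fin n), OrdGe (∑ i ∈ s, k i) (∏ i ∈ s, u i ^ k i) := by
    intro s
    induction s using Finset.cons_induction with
    | empty => simpa using ordGe_zero (K := K) 1
    | cons a s ha ih =>
        rw [Finset.prod_cons, Finset.sum_cons]
        exact ordGe_mul (ordGe_pow (ordGe_one (hu a)) (k a)) ih
  exact H Finset.univ

lemma coeff_prod_pow_eq_zero (u : Fin n → MvPowerSeries (Fin n) K)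
    (hu : ∀ i, MvPowerSeries.constantCoeff (σ := Fin n) (R := K) (u i) = 0) (k : Fin n → ℕ) (μ : Fin n →₀ ℕ)
    (h : dgF μ < dg k) : MvPowerSeries.coeff (R := K) μ (∏ i, u i ^ k i) = 0 :=
  ordGe_prod u hu k μ h

lemma coeff_prod_pow_mul_eq_zero (u : Fin n → MvPowerSeries (Fin n) K)
    (hu : ∀ i, MvPowerSeries.constantCoeff (σ := Fin n) (R := K) (u i) = 0) (k : Fin n → ℕ)
    (g : MvPowerSeries (Fin n) K) (μ : Fin n →₀ ℕ) (h : dgF μ < dg k) :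
    MvPowerSeries.coeff (R := K) μ ((∏ i, u i ^ k i) * g) = 0 := by
  have := ordGe_mul (ordGe_prod u hu k) (ordGe_zero g)
  rw [add_zero] at this
  exact this μ h

open scoped Classical in
lemma sum_antidiagonal_piFinset {M : Type*} [AddCommMonoid M] (μ : Fin n →₀ ℕ)
    (G : (Fin n →₀ ℕ) → (Fin n →₀ ℕ) → M) :
    ∑ x ∈ Finset.HasAntidiagonal.antidiagonal μ, G x.1 x.2 =
      ∑ t ∈ Fintype.piFinset (fun _ : Fin n => Finset.range (dgF μ + 1)),
        if eS t ≤ μ then G (μ - eS t) (eS t) else 0 := by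
  rw [← Finset.sum_filter]
  refine Finset.sum_bij' (fun x _ => ⇑x.2) (fun t _ => (μ - eS t, eS t)) ?_ ?_ ?_ ?_ ?_
  · intro x hx
    rw [Finset.HasAntidiagonal.mem_antidiagonal] at hx
    have hle : x.2 ≤ μ := hx ▸ le_add_self
    rw [Finset.mem_filter]
    constructor
    · rw [Fintype.mem_piFinset]
      intro i
      rw [Finset.mem_range, Nat.lt_succ_iff]
      exact le_trans (le_trans (Finsupp.le_def.mp hle i) le_rfl) (apply_le_dgF μ i)
    · rw [eS_coe]; exact hle
  · intro t ht
    rw [Finset.mem_filter] at ht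
    rw [Finset.HasAntidiagonal.mem_antidiagonal]
    exact tsub_add_cancel_of_le ht.2
  · intro x hx
    rw [Finset.HasAntidiagonal.mem_antidiagonal] at hx
    show (μ - eS ⇑x.2, eS ⇑x.2) = x
    simp only [eS_coe]
    rw [← eq_tsub_of_add_eq hx]
  · intro t ht
    show ⇑(eS t) = t
    rfl
  · intro x hx
    rw [Finset.HasAntidiagonal.mem_antidiagonal] at hx
    rw [eS_coe, eq_tsub_of_add_eq hx]

lemma prod_X_pow (j : Fin n → ℕ) :
    (∏ i, (MvPowerSeries.X i : MvPowerSeries (Fin n) K) ^ j i) = monomial (R := K) (eS j) 1 := by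
  have H : ∀ s : Finset (Fin n),
      (∏ i ∈ s, (MvPowerSeries.X i : MvPowerSeries (Fin n) K) ^ j i)
        = monomial (R := K) (∑ i ∈ s, Finsupp.single i (j i)) 1 := by
    intro s
    induction s using Finset.cons_induction with
    | empty => rw [Finset.prod_empty, Finset.sum_empty, MvPowerSeries.monomial_zero_one]
    | cons a s ha ih =>
        rw [Finset.prod_cons, Finset.sum_cons, ih, MvPowerSeries.X_pow_eq,
          MvPowerSeries.monomial_mul_monomial, one_mul]
  rw [H Finset.univ]
  have hs : (∑ i, Finsupp.single i (j i)) = eS j := by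
    ext a
    rw [Finsupp.finset_sum_apply]
    simp [Finsupp.single_apply]
  rw [hs]

open scoped Classical in
noncomputable def Fterm (u : Fin n → MvPowerSeries (Fin n) K) (f : MvPowerSeries (Fin n) K)
    (μ : Fin n →₀ ℕ) (k t : Fin n → ℕ) : K :=
  if eS t ≤ μ then
    (∏ i, (((t i + k i).choose (k i) : ℕ) : K)) *
      (MvPowerSeries.coeff (R := K) (μ - eS t) (∏ i, u i ^ k i) *
        MvPowerSeries.coeff (R := K) (eS t + eS k) f)
  else 0

lemma dgF_sub_add (μ : Fin n →₀ ℕ) (t : Fin n → ℕ) (h : eS t ≤ μ) :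
    dgF (μ - eS t) + dg t = dgF μ := by
  have hpt : ∀ i, t i ≤ μ i := fun i => Finsupp.le_def.mp h i
  rw [dgF_eq, dgF_eq]
  unfold dg
  rw [← Finset.sum_add_distrib]
  refine Finset.sum_congr rfl fun i _ => ?_
  rw [Finsupp.tsub_apply, eS_apply]
  have := hpt i
  omega

lemma Fterm_eq_zero (u : Fin n → MvPowerSeries (Fin n) K)
    (hu : ∀ i, MvPowerSeries.constantCoeff (σ := Fin n) (R := K) (u i) = 0)
    (f : MvPowerSeries (Fin n) K) (μ : Fin n →₀ ℕ) (k t : Fin n → ℕ)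
    (i₀ : Fin n) (hbig : dgF μ < k i₀ + t i₀) : Fterm u f μ k t = 0 := by
  unfold Fterm
  split_ifs with h
  · have hco : MvPowerSeries.coeff (R := K) (μ - eS t) (∏ i, u i ^ k i) = 0 := by
      refine coeff_prod_pow_eq_zero u hu k _ ?_
      by_contra hlt
      push_neg at hlt
      have h1 := dgF_sub_add μ t h
      have h2 := apply_le_dg k i₀
      have h3 := apply_le_dg t i₀
      omega
    rw [hco, zero_mul, mul_zero]
  · rfl

lemma eS_add_sub (p j : Fin n → ℕ) (h : ∀ i, j i ≤ p i) :
    eS j + eS (fun i => p i - j i) = eS p := by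
  ext a
  rw [Finsupp.add_apply, eS_apply, eS_apply, eS_apply]
  exact Nat.add_sub_cancel' (h a)

lemma claimL (u : Fin n → MvPowerSeries (Fin n) K) (f : MvPowerSeries (Fin n) K)
    (μ : Fin n →₀ ℕ) (k : Fin n → ℕ) :
    MvPowerSeries.coeff (R := K) μ
        ((((∏ i, (k i).factorial : ℕ) : K)⁻¹ • ∏ i, u i ^ k i) * Dmulti k f)
      = ∑ t ∈ Fintype.piFinset fun _ : Fin n => Finset.range (dgF μ + 1), Fterm u f μ k t := by
  classical
  have hc0 : ((∏ i, (k i).factorial : ℕ) : K) ≠ 0 :=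
    Nat.cast_ne_zero.mpr (Finset.prod_ne_zero_iff.mpr fun i _ => (Nat.factorial_pos _).ne')
  have hc0' : (∏ i, ((k i).factorial : K)) ≠ 0 := by
    rw [← Nat.cast_prod]; exact hc0
  rw [smul_mul_assoc, MvPowerSeries.coeff_smul, MvPowerSeries.coeff_mul, Finset.mul_sum]
  have step : ∀ x ∈ Finset.HasAntidiagonal.antidiagonal μ,
      ((∏ i, (k i).factorial : ℕ) : K)⁻¹ *
          (MvPowerSeries.coeff (R := K) x.1 (∏ i, u i ^ k i) * MvPowerSeries.coeff (R := K) x.2 (Dmulti k f))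
        = (∏ i, (((x.2 i + k i).choose (k i) : ℕ) : K)) *
            (MvPowerSeries.coeff (R := K) x.1 (∏ i, u i ^ k i) *
              MvPowerSeries.coeff (R := K) (x.2 + eS k) f) := by
    intro x _
    have hD : MvPowerSeries.coeff (R := K) x.2 (Dmulti k f)
        = (∏ i, (((x.2 i + k i).factorial / (x.2 i).factorial : ℕ) : K)) *
            MvPowerSeries.coeff (R := K) (x.2 + eS k) f := rfl
    have hfac : ∀ i, ((x.2 i + k i).factorial / (x.2 i).factorial : ℕ)
        = (x.2 i + k i).choose (k i) * (k i).factorial := by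
      intro i
      refine Nat.div_eq_of_eq_mul_left (Nat.factorial_pos _) ?_
      have h := Nat.choose_mul_factorial_mul_factorial (Nat.le_add_left (k i) (x.2 i))
      rw [Nat.add_sub_cancel] at h
      rw [← h]
    rw [hD]
    simp only [hfac]
    push_cast
    rw [Finset.prod_mul_distrib]
    field_simp
  rw [Finset.sum_congr rfl step]
  rw [sum_antidiagonal_piFinset μ (fun σ τ =>
    (∏ i, ((τ i + k i).choose (k i) : K)) *
      (MvPowerSeries.coeff (R := K) σ (∏ i, u i ^ k i) * MvPowerSeries.coeff (R := K) (τ + eS k) f))]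
  refine Finset.sum_congr rfl fun t _ => ?_
  unfold Fterm
  split_ifs with h
  · rfl
  · rfl

lemma expand_prod_add (u : Fin n → MvPowerSeries (Fin n) K) (p : Fin n → ℕ) :
    (∏ i, (MvPowerSeries.X i + u i) ^ p i)
      = ∑ j ∈ Fintype.piFinset (fun i => Finset.range (p i + 1)),
          (monomial (R := K) (eS j) 1 * ∏ i, u i ^ (p i - j i)) *
            MvPowerSeries.C (σ := Fin n) (R := K) (((∏ i, (p i).choose (j i) : ℕ) : K)) := by
  classical
  calc (∏ i, (MvPowerSeries.X i + u i) ^ p i)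
      = ∏ i, ∑ j ∈ Finset.range (p i + 1),
          (MvPowerSeries.X i) ^ j * u i ^ (p i - j) *
            (((p i).choose j : ℕ) : MvPowerSeries (Fin n) K) :=
        Finset.prod_congr rfl fun i _ => add_pow _ _ _
    _ = ∑ j ∈ Fintype.piFinset (fun i => Finset.range (p i + 1)),
          ∏ i, ((MvPowerSeries.X i) ^ j i * u i ^ (p i - j i) *
            (((p i).choose (j i) : ℕ) : MvPowerSeries (Fin n) K)) :=
        Finset.prod_univ_sum _ _
    _ = _ := by
        refine Finset.sum_congr rfl fun j _ => ?_
        rw [Finset.prod_mul_distrib, Finset.prod_mul_distrib, prod_X_pow]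
        have hC : (∏ i, (((p i).choose (j i) : ℕ) : MvPowerSeries (Fin n) K))
            = MvPowerSeries.C (σ := Fin n) (R := K) (((∏ i, (p i).choose (j i) : ℕ) : K)) := by
          rw [map_natCast (MvPowerSeries.C (σ := Fin n) (R := K)), Nat.cast_prod]
        rw [hC]

open scoped Classical in
noncomputable def Hterm (u : Fin n → MvPowerSeries (Fin n) K) (f : MvPowerSeries (Fin n) K)
    (μ : Fin n →₀ ℕ) (p j : Fin n → ℕ) : K :=
  (if eS j ≤ μ then MvPowerSeries.coeff (R := K) (μ - eS j) (∏ i, u i ^ (p i - j i)) else 0) *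
    ((∏ i, (((p i).choose (j i) : ℕ) : K)) * MvPowerSeries.coeff (R := K) (eS p) f)

lemma step1 (u : Fin n → MvPowerSeries (Fin n) K) (f : MvPowerSeries (Fin n) K)
    (μ : Fin n →₀ ℕ) (p : Fin n → ℕ) :
    MvPowerSeries.coeff (R := K) (eS p) f *
        MvPowerSeries.coeff (R := K) μ (∏ i, (MvPowerSeries.X i + u i) ^ p i)
      = ∑ j ∈ Fintype.piFinset (fun i => Finset.range (p i + 1)), Hterm u f μ p j := by
  classical
  rw [expand_prod_add, map_sum, Finset.mul_sum]
  refine Finset.sum_congr rfl fun j _ => ?_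
  rw [MvPowerSeries.coeff_mul_C, MvPowerSeries.coeff_monomial_mul]
  simp only [Hterm]
  split_ifs with h
  · rw [one_mul]
    push_cast
    ring
  · simp


lemma sum_prod_filter {ι κ β : Type*} [AddCommMonoid β] (s : Finset ι) (t : Finset κ)
    (P : ι → κ → Prop) [∀ p j, Decidable (P p j)] (g : ι → κ → β) :
    ∑ q ∈ (s ×ˢ t).filter (fun q => P q.1 q.2), g q.1 q.2
      = ∑ p ∈ s, ∑ j ∈ t.filter (P p), g p j := by
  rw [Finset.sum_filter, Finset.sum_product]
  exact Finset.sum_congr rfl fun p _ => (Finset.sum_filter _ _).symm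

open scoped Classical in
set_option maxHeartbeats 1000000 in
lemma stepBij (u : Fin n → MvPowerSeries (Fin n) K) (f : MvPowerSeries (Fin n) K)
    (μ : Fin n →₀ ℕ) :
    ∑ q ∈ ((Fintype.piFinset fun _ : Fin n => Finset.range (dgF μ + 1)) ×ˢ
        (Fintype.piFinset fun _ : Fin n => Finset.range (dgF μ + 1))).filter
          (fun q => ∀ i, q.2 i ≤ q.1 i), Hterm u f μ q.1 q.2
      = ∑ q ∈ ((Fintype.piFinset fun _ : Fin n => Finset.range (dgF μ + 1)) ×ˢ
          (Fintype.piFinset fun _ : Fin n => Finset.range (dgF μ + 1))).filter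
            (fun q => ∀ i, q.1 i + q.2 i ≤ dgF μ), Fterm u f μ q.1 q.2 := by
  have hmemT : ∀ k : Fin n → ℕ,
      k ∈ (Fintype.piFinset fun _ : Fin n => Finset.range (dgF μ + 1)) ↔ ∀ i, k i ≤ dgF μ := by
    intro k
    simp [Fintype.mem_piFinset, Nat.lt_succ_iff]
  refine Finset.sum_bij' (fun q _ => ((fun i => q.1 i - q.2 i), q.2))
    (fun q _ => ((fun i => q.1 i + q.2 i), q.2)) ?_ ?_ ?_ ?_ ?_
  · intro q hq
    rw [Finset.mem_filter, Finset.mem_product, hmemT, hmemT] at hq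
    rw [Finset.mem_filter, Finset.mem_product, hmemT, hmemT]
    dsimp only
    refine ⟨⟨fun i => le_trans (Nat.sub_le _ _) (hq.1.1 i), hq.1.2⟩, fun i => ?_⟩
    have h1 := hq.2 i
    have h2 := hq.1.1 i
    omega
  · intro q hq
    rw [Finset.mem_filter, Finset.mem_product, hmemT, hmemT] at hq
    rw [Finset.mem_filter, Finset.mem_product, hmemT, hmemT]
    dsimp only
    exact ⟨⟨fun i => hq.2 i, hq.1.2⟩, fun i => Nat.le_add_left _ _⟩
  · intro q hq
    rw [Finset.mem_filter] at hq
    have hc := hq.2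
    dsimp only
    refine Prod.ext ?_ rfl
    funext i
    exact Nat.sub_add_cancel (hc i)
  · intro q hq
    dsimp only
    refine Prod.ext ?_ rfl
    funext i
    show q.1 i + q.2 i - q.2 i = q.1 i
    omega
  · intro q hq
    rw [Finset.mem_filter] at hq
    have hc := hq.2
    simp only [Hterm, Fterm]
    have h1 : ∀ i, q.2 i + (q.1 i - q.2 i) = q.1 i := fun i => Nat.add_sub_cancel' (hc i)
    have h2 : ∀ i, (q.1 i).choose (q.1 i - q.2 i) = (q.1 i).choose (q.2 i) :=
      fun i => Nat.choose_symm (hc i)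
    simp only [h1, h2]
    rw [eS_add_sub q.1 q.2 hc]
    split_ifs with h
    · ring
    · simp

open scoped Classical in
set_option maxHeartbeats 1000000 in
lemma claimR (u : Fin n → MvPowerSeries (Fin n) K)
    (hu : ∀ i, MvPowerSeries.constantCoeff (σ := Fin n) (R := K) (u i) = 0)
    (f : MvPowerSeries (Fin n) K) (μ : Fin n →₀ ℕ) :
    ∑ p ∈ Fintype.piFinset (fun _ : Fin n => Finset.range (dgF μ + 1)),
        MvPowerSeries.coeff (R := K) (eS p) f *
          MvPowerSeries.coeff (R := K) μ (∏ i, (MvPowerSeries.X i + u i) ^ p i)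
      = ∑ k ∈ Fintype.piFinset (fun _ : Fin n => Finset.range (dgF μ + 1)),
          ∑ t ∈ Fintype.piFinset (fun _ : Fin n => Finset.range (dgF μ + 1)),
            Fterm u f μ k t := by
  have hmemT : ∀ k : Fin n → ℕ,
      k ∈ (Fintype.piFinset fun _ : Fin n => Finset.range (dgF μ + 1)) ↔ ∀ i, k i ≤ dgF μ := by
    intro k
    simp [Fintype.mem_piFinset, Nat.lt_succ_iff]
  have hpi : ∀ p ∈ (Fintype.piFinset fun _ : Fin n => Finset.range (dgF μ + 1)),
      Fintype.piFinset (fun i => Finset.range (p i + 1))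
        = (Fintype.piFinset fun _ : Fin n => Finset.range (dgF μ + 1)).filter
            (fun j => ∀ i, j i ≤ p i) := by
    intro p hp
    ext j
    rw [Fintype.mem_piFinset, Finset.mem_filter, hmemT]
    constructor
    · intro h
      refine ⟨fun i => le_trans (Nat.lt_succ_iff.mp (Finset.mem_range.mp (h i)))
        ((hmemT p).mp hp i), fun i => Nat.lt_succ_iff.mp (Finset.mem_range.mp (h i))⟩
    · intro h i
      exact Finset.mem_range.mpr (Nat.lt_succ_iff.mpr (h.2 i))
  calc ∑ p ∈ Fintype.piFinset (fun _ : Fin n => Finset.range (dgF μ + 1)),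
        MvPowerSeries.coeff (R := K) (eS p) f *
          MvPowerSeries.coeff (R := K) μ (∏ i, (MvPowerSeries.X i + u i) ^ p i)
      = ∑ p ∈ Fintype.piFinset (fun _ : Fin n => Finset.range (dgF μ + 1)),
          ∑ j ∈ (Fintype.piFinset fun _ : Fin n => Finset.range (dgF μ + 1)).filter
            (fun j => ∀ i, j i ≤ p i), Hterm u f μ p j := by
        refine Finset.sum_congr rfl fun p hp => ?_
        rw [step1 u f μ p, hpi p hp]
    _ = ∑ q ∈ ((Fintype.piFinset fun _ : Fin n => Finset.range (dgF μ + 1)) ×ˢ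
          (Fintype.piFinset fun _ : Fin n => Finset.range (dgF μ + 1))).filter
            (fun q => ∀ i, q.2 i ≤ q.1 i), Hterm u f μ q.1 q.2 :=
        (sum_prod_filter _ _ _ _).symm
    _ = ∑ q ∈ ((Fintype.piFinset fun _ : Fin n => Finset.range (dgF μ + 1)) ×ˢ
          (Fintype.piFinset fun _ : Fin n => Finset.range (dgF μ + 1))).filter
            (fun q => ∀ i, q.1 i + q.2 i ≤ dgF μ), Fterm u f μ q.1 q.2 := stepBij u f μ
    _ = ∑ q ∈ ((Fintype.piFinset fun _ : Fin n => Finset.range (dgF μ + 1)) ×ˢ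
          (Fintype.piFinset fun _ : Fin n => Finset.range (dgF μ + 1))), Fterm u f μ q.1 q.2 := by
        refine Finset.sum_filter_of_ne fun q hq hne => ?_
        by_contra h
        push_neg at h
        obtain ⟨i₀, hi₀⟩ := h
        exact hne (Fterm_eq_zero u hu f μ q.1 q.2 i₀ (by omega))
    _ = _ := Finset.sum_product _ _ _


set_option maxHeartbeats 1000000 in
/-- If `α` is a K-algebra endomorphism of `K[[x₁,…,xₙ]]`
which is continuous in the m-adic topology — i.e. `α(xᵢ)` has zero constant
term and `α` is given by substitution of the `α(xᵢ)` — then `P_α ∈ D̂ₙ^sym`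
(finite order) and `P_α(f) = f(x₁+u₁,…,xₙ+uₙ) = α(f)` for every `f`. -/
theorem Palpha_realizes_endomorphism
    (α : MvPowerSeries (Fin n) K →ₐ[K] MvPowerSeries (Fin n) K)
    (hm : ∀ i, MvPowerSeries.constantCoeff (σ := Fin n) (R := K) (α (MvPowerSeries.X i)) = 0)
    (hc : ∀ f, α f = substF (fun i => α (MvPowerSeries.X i)) f) :
    ord (Palpha α) ≠ ⊤ ∧ ∀ f, opApply (Palpha α) f = α f := by
  classical
  have hu : ∀ i, MvPowerSeries.constantCoeff (σ := Fin n) (R := K)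
      (α (MvPowerSeries.X i) - MvPowerSeries.X i) = 0 := by
    intro i
    rw [map_sub, hm i, MvPowerSeries.constantCoeff_X, sub_zero]
  constructor
  · have h0 : ord (Palpha α) ≤ ((0 : ℝ) : EReal) := by
      refine iSup_le fun k => iSup_le fun μ => iSup_le fun hne => ?_
      have hcu : MvPowerSeries.coeff (R := K) μ
          (∏ i, (α (MvPowerSeries.X i) - MvPowerSeries.X i) ^ k i) ≠ 0 := by
        intro h
        apply hne
        show MvPowerSeries.coeff (R := K) μ ((((∏ i, (k i).factorial : ℕ) : K)⁻¹) •
          ∏ i, (α (MvPowerSeries.X i) - MvPowerSeries.X i) ^ k i) = 0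
        rw [MvPowerSeries.coeff_smul, h, mul_zero]
      have hle : dg k ≤ dgF μ := by
        by_contra h
        push_neg at h
        exact hcu (coeff_prod_pow_eq_zero _ hu k μ h)
      rw [EReal.coe_le_coe_iff]
      have hz : ((dg k : ℤ) - (dgF μ : ℤ)) ≤ 0 := by omega
      exact_mod_cast hz
    intro htop
    rw [htop] at h0
    exact absurd h0 (not_le.mpr (EReal.coe_lt_top 0))
  · intro f
    apply MvPowerSeries.ext
    intro μ
    rw [hc f, MvPowerSeries.coeff_apply, MvPowerSeries.coeff_apply]
    show opApply (Palpha α) f μ = substF (fun i => α (MvPowerSeries.X i)) f μ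
    simp only [opApply, substF]
    have hLsupp : (Function.support fun k : Fin n → ℕ =>
        MvPowerSeries.coeff (R := K) μ (Palpha α k * Dmulti k f)) ⊆
        ↑(Fintype.piFinset fun _ : Fin n => Finset.range (dgF μ + 1)) := by
      intro k hk
      simp only [Function.mem_support] at hk
      by_contra hkT
      apply hk
      rw [Finset.mem_coe, Fintype.mem_piFinset] at hkT
      push_neg at hkT
      obtain ⟨i₀, hi₀⟩ := hkT
      rw [Finset.mem_range, Nat.lt_succ_iff] at hi₀
      push_neg at hi₀
      have hdg : dgF μ < dg k := lt_of_lt_of_le hi₀ (apply_le_dg k i₀)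
      show MvPowerSeries.coeff (R := K) μ ((((∏ i, (k i).factorial : ℕ) : K)⁻¹ •
        ∏ i, (α (MvPowerSeries.X i) - MvPowerSeries.X i) ^ k i) * Dmulti k f) = 0
      rw [smul_mul_assoc, MvPowerSeries.coeff_smul,
        coeff_prod_pow_mul_eq_zero _ hu k _ μ hdg, mul_zero]
    have hRsupp : (Function.support fun p : Fin n → ℕ =>
        MvPowerSeries.coeff (R := K) (Finsupp.equivFunOnFinite.symm p) f *
          MvPowerSeries.coeff (R := K) μ (∏ i, (α (MvPowerSeries.X i)) ^ p i)) ⊆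
        ↑(Fintype.piFinset fun _ : Fin n => Finset.range (dgF μ + 1)) := by
      intro p hp
      simp only [Function.mem_support] at hp
      by_contra hpT
      apply hp
      rw [Finset.mem_coe, Fintype.mem_piFinset] at hpT
      push_neg at hpT
      obtain ⟨i₀, hi₀⟩ := hpT
      rw [Finset.mem_range, Nat.lt_succ_iff] at hi₀
      push_neg at hi₀
      have hdg : dgF μ < dg p := lt_of_lt_of_le hi₀ (apply_le_dg p i₀)
      rw [coeff_prod_pow_eq_zero _ hm p μ hdg, mul_zero]
    rw [finsum_eq_sum_of_support_subset _ hLsupp, finsum_eq_sum_of_support_subset _ hRsupp]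
    have hprod : ∀ p : Fin n → ℕ,
        (∏ i, (MvPowerSeries.X i + (α (MvPowerSeries.X i) - MvPowerSeries.X i)) ^ p i)
          = ∏ i, (α (MvPowerSeries.X i)) ^ p i := by
      intro p
      refine Finset.prod_congr rfl fun i _ => ?_
      rw [show MvPowerSeries.X i + (α (MvPowerSeries.X i) - MvPowerSeries.X i)
        = α (MvPowerSeries.X i) from by ring]
    calc ∑ k ∈ Fintype.piFinset (fun _ : Fin n => Finset.range (dgF μ + 1)),
          MvPowerSeries.coeff (R := K) μ (Palpha α k * Dmulti k f)
        = ∑ k ∈ Fintype.piFinset (fun _ : Fin n => Finset.range (dgF μ + 1)),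
            ∑ t ∈ Fintype.piFinset (fun _ : Fin n => Finset.range (dgF μ + 1)),
              Fterm (fun i => α (MvPowerSeries.X i) - MvPowerSeries.X i) f μ k t :=
          Finset.sum_congr rfl fun k _ =>
            claimL (fun i => α (MvPowerSeries.X i) - MvPowerSeries.X i) f μ k
      _ = ∑ p ∈ Fintype.piFinset (fun _ : Fin n => Finset.range (dgF μ + 1)),
            MvPowerSeries.coeff (R := K) (eS p) f * MvPowerSeries.coeff (R := K) μ
              (∏ i, (MvPowerSeries.X i + (α (MvPowerSeries.X i) - MvPowerSeries.X i)) ^ p i) :=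
          (claimR (fun i => α (MvPowerSeries.X i) - MvPowerSeries.X i) hu f μ).symm
      _ = ∑ p ∈ Fintype.piFinset (fun _ : Fin n => Finset.range (dgF μ + 1)),
            MvPowerSeries.coeff (R := K) (Finsupp.equivFunOnFinite.symm p) f *
              MvPowerSeries.coeff (R := K) μ (∏ i, (α (MvPowerSeries.X i)) ^ p i) := by
          refine Finset.sum_congr rfl fun p _ => ?_
          rw [hprod p]
          rfl

end
end

section
/- Let F be as in the Abhyankar setting with j(F) = 1, and define derivations Δ_i(G) := det J(F_1,...,F_{i−1}, G, F_{i+1},...,F_n). Then Δ_i(F_j) = δ_{ij} for all i, j, and consequently the derivations Δ_1,...,Δ_n pairwise commute on K[[x_1,...,x_n]]. -/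
/-!
STATEMENT 8: With `F` as in the Abhyankar setting (`F(0) = 0`, `j(F) = 1`),
the derivations `Δᵢ(G) := det J(F₁,…,F_{i−1}, G, F_{i+1},…,Fₙ)` satisfy
`Δᵢ(F_j) = δ_{ij}` and consequently pairwise commute on `K[[x₁,…,xₙ]]`.
-/

open MvPowerSeries

noncomputable section

variable {K : Type*} [Field K] [CharZero K] {n : ℕ}

/-- the partial derivative `∂_a` of a multivariate power series -/
def pd (a : Fin n) (f : MvPowerSeries (Fin n) K) : MvPowerSeries (Fin n) K :=
  fun ν => ((ν a + 1 : ℕ) : K) * MvPowerSeries.coeff (ν + Finsupp.single a 1) f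

/-- `Δᵢ(g) := det J(F₁,…,F_{i−1}, g, F_{i+1},…,Fₙ)`, the Jacobian determinant
with `Fᵢ` replaced by `g` -/
def Delta (F : Fin n → MvPowerSeries (Fin n) K) (i : Fin n)
    (g : MvPowerSeries (Fin n) K) : MvPowerSeries (Fin n) K :=
  Matrix.det (Matrix.of fun a b => pd a (Function.update F i g b))

set_option linter.unusedSectionVars false

lemma coeff_pd (a : Fin n) (f : MvPowerSeries (Fin n) K) (ν : (Fin n) →₀ ℕ) :
    coeff ν (pd a f) = ((ν a + 1 : ℕ) : K) * coeff (ν + (Finsupp.single a 1 : Fin n →₀ ℕ)) f := rfl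

lemma pd_add (a : Fin n) (f g : MvPowerSeries (Fin n) K) :
    pd a (f + g) = pd a f + pd a g := by
  ext ν
  simp [coeff_pd, map_add, mul_add]

lemma pd_zero (a : Fin n) : pd a (0 : MvPowerSeries (Fin n) K) = 0 := by
  ext ν; simp [coeff_pd]

lemma pd_one (a : Fin n) : pd a (1 : MvPowerSeries (Fin n) K) = 0 := by
  ext ν
  rw [coeff_pd, MvPowerSeries.coeff_one]
  have : ν + (Finsupp.single a 1 : Fin n →₀ ℕ) ≠ 0 := by
    intro h
    have := DFunLike.congr_fun h a
    simp at this
  simp [this]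

lemma pd_sum {β : Type*} (s : Finset β) (a : Fin n) (f : β → MvPowerSeries (Fin n) K) :
    pd a (∑ b ∈ s, f b) = ∑ b ∈ s, pd a (f b) := by
  classical
  induction s using Finset.induction with
  | empty => simp [pd_zero]
  | insert _ _ h ih => simp [Finset.sum_insert h, pd_add, ih]

lemma pd_comm (a b : Fin n) (f : MvPowerSeries (Fin n) K) :
    pd a (pd b f) = pd b (pd a f) := by
  ext ν
  simp only [coeff_pd]
  rw [add_right_comm ν ((Finsupp.single a 1 : Fin n →₀ ℕ)) (Finsupp.single b 1)]
  simp only [Finsupp.add_apply, Finsupp.single_apply]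
  by_cases h : a = b
  · subst h; ring
  · rw [if_neg h, if_neg (fun e => h e.symm)]
    push_cast
    ring

lemma key_sum (a : Fin n) (ν : Fin n →₀ ℕ) (f g : (Fin n →₀ ℕ) → K) :
    ∑ p ∈ Finset.HasAntidiagonal.antidiagonal (ν + (Finsupp.single a 1 : Fin n →₀ ℕ)), (p.2 a : K) * (f p.1 * g p.2)
      = ∑ q ∈ Finset.HasAntidiagonal.antidiagonal ν,
          ((q.2 a + 1 : ℕ) : K) * (f q.1 * g (q.2 + (Finsupp.single a 1 : Fin n →₀ ℕ))) := by
  classical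
  have hfil : ∑ p ∈ Finset.HasAntidiagonal.antidiagonal (ν + (Finsupp.single a 1 : Fin n →₀ ℕ)), (p.2 a : K) * (f p.1 * g p.2)
      = ∑ p ∈ (Finset.HasAntidiagonal.antidiagonal (ν + (Finsupp.single a 1 : Fin n →₀ ℕ))).filter
          (fun p => p.2 a ≠ 0), (p.2 a : K) * (f p.1 * g p.2) := by
    refine (Finset.sum_filter_of_ne ?_).symm
    intro p _ h
    by_contra hp
    have hp0 : p.2 a = 0 := by omega
    simp [hp0] at h
  rw [hfil]
  refine Finset.sum_bij' (i := fun p _ => (p.1, p.2 - (Finsupp.single a 1 : Fin n →₀ ℕ)))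
    (j := fun q _ => (q.1, q.2 + (Finsupp.single a 1 : Fin n →₀ ℕ))) ?_ ?_ ?_ ?_ ?_
  · intro p hp
    simp only [Finset.mem_filter, Finset.HasAntidiagonal.mem_antidiagonal] at hp
    obtain ⟨hsum, hne⟩ := hp
    have hle : (Finsupp.single a 1 : Fin n →₀ ℕ) ≤ p.2 := by
      rw [Finsupp.single_le_iff]; omega
    simp only [Finset.HasAntidiagonal.mem_antidiagonal]
    have : p.1 + (p.2 - Finsupp.single a 1) + Finsupp.single a 1
        = ν + (Finsupp.single a 1 : Fin n →₀ ℕ) := by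
      rw [add_assoc, tsub_add_cancel_of_le hle, hsum]
    exact add_right_cancel this
  · intro q hq
    simp only [Finset.HasAntidiagonal.mem_antidiagonal] at hq
    simp only [Finset.mem_filter, Finset.HasAntidiagonal.mem_antidiagonal]
    refine ⟨by rw [← add_assoc, hq], by simp⟩
  · intro p hp
    simp only [Finset.mem_filter, Finset.HasAntidiagonal.mem_antidiagonal] at hp
    have hle : (Finsupp.single a 1 : Fin n →₀ ℕ) ≤ p.2 := by
      rw [Finsupp.single_le_iff]; omega
    simp [tsub_add_cancel_of_le hle]
  · intro q hq
    simp
  · intro p hp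
    simp only [Finset.mem_filter, Finset.HasAntidiagonal.mem_antidiagonal] at hp
    have hle : (Finsupp.single a 1 : Fin n →₀ ℕ) ≤ p.2 := by
      rw [Finsupp.single_le_iff]; omega
    have h2 : p.2 - Finsupp.single a 1 + (Finsupp.single a 1 : Fin n →₀ ℕ) = p.2 :=
      tsub_add_cancel_of_le hle
    have h3 : (p.2 - (Finsupp.single a 1 : Fin n →₀ ℕ)) a + 1 = p.2 a := by
      have := DFunLike.congr_fun h2 a
      simpa using this
    simp only [h2, h3]

lemma antidiag_swap (m : Fin n →₀ ℕ) (h : ((Fin n →₀ ℕ) × (Fin n →₀ ℕ)) → K) :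
    ∑ p ∈ Finset.HasAntidiagonal.antidiagonal m, h p = ∑ p ∈ Finset.HasAntidiagonal.antidiagonal m, h (p.2, p.1) := by
  apply Finset.sum_nbij' (fun p => (p.2, p.1)) (fun p => (p.2, p.1)) <;>
    simp [Finset.swap_mem_antidiagonal, add_comm]

lemma pd_mul (a : Fin n) (f g : MvPowerSeries (Fin n) K) :
    pd a (f * g) = f * pd a g + pd a f * g := by
  classical
  ext ν
  rw [map_add, coeff_pd, coeff_mul, coeff_mul, coeff_mul, Finset.mul_sum]
  have hsplit : ∀ p ∈ Finset.HasAntidiagonal.antidiagonal (ν + (Finsupp.single a 1 : Fin n →₀ ℕ)),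
      ((ν a + 1 : ℕ) : K) * (coeff p.1 f * coeff p.2 g)
        = (p.2 a : K) * (coeff p.1 f * coeff p.2 g)
          + (p.1 a : K) * (coeff p.1 f * coeff p.2 g) := by
    intro p hp
    simp only [Finset.HasAntidiagonal.mem_antidiagonal] at hp
    have h1 : p.1 a + p.2 a = ν a + 1 := by
      have := DFunLike.congr_fun hp a
      simpa using this
    rw [← add_mul]
    congr 1
    push_cast [← h1]
    ring
  rw [Finset.sum_congr rfl hsplit, Finset.sum_add_distrib]
  congr 1
  · rw [key_sum a ν (fun μ => coeff μ f) (fun μ => coeff μ g)]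
    apply Finset.sum_congr rfl
    intro q _
    rw [coeff_pd]
    ring
  · rw [antidiag_swap _ (fun p => (p.1 a : K) * (coeff p.1 f * coeff p.2 g)),
      antidiag_swap _ (fun p => coeff p.1 (pd a f) * coeff p.2 g)]
    have hre : ∑ x ∈ Finset.HasAntidiagonal.antidiagonal (ν + (Finsupp.single a 1 : Fin n →₀ ℕ)),
        (x.2 a : K) * (coeff x.2 f * coeff x.1 g)
        = ∑ x ∈ Finset.HasAntidiagonal.antidiagonal (ν + (Finsupp.single a 1 : Fin n →₀ ℕ)),
          (x.2 a : K) * (coeff x.1 g * coeff x.2 f) :=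
      Finset.sum_congr rfl fun p _ => by ring
    rw [hre, key_sum a ν (fun μ => coeff μ g) (fun μ => coeff μ f)]
    apply Finset.sum_congr rfl
    intro q _
    rw [coeff_pd]
    ring

def Jm (F : Fin n → MvPowerSeries (Fin n) K) : Matrix (Fin n) (Fin n) (MvPowerSeries (Fin n) K) :=
  Matrix.of fun a b => pd a (F b)

def Cm (F : Fin n → MvPowerSeries (Fin n) K) : Matrix (Fin n) (Fin n) (MvPowerSeries (Fin n) K) :=
  Matrix.of fun a i => Matrix.cramer (Jm F) (Pi.single a 1) i

lemma Delta_eq (F : Fin n → MvPowerSeries (Fin n) K) (i : Fin n)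
    (g : MvPowerSeries (Fin n) K) :
    Delta F i g = ∑ a, pd a g * Cm F a i := by
  classical
  have hM : (Matrix.of fun a b => pd a (Function.update F i g b))
      = (Jm F).updateCol i (fun a => pd a g) := by
    ext a b
    rw [Matrix.of_apply, Matrix.updateCol_apply, Function.update_apply]
    split <;> rfl
  rw [Delta, hM, ← Matrix.cramer_apply]
  have hv : (fun a => pd a g) = ∑ a : Fin n, pd a g • (Pi.single a 1 : Fin n → MvPowerSeries (Fin n) K) := by
    ext b
    simp [Pi.single_apply, Finset.sum_apply]
  rw [hv, map_sum]
  simp only [map_smul, Finset.sum_apply, Pi.smul_apply, smul_eq_mul]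
  rfl

variable (F : Fin n → MvPowerSeries (Fin n) K)

lemma Delta_F (hjac : (Jm F).det = 1) (i j : Fin n) :
    Delta F i (F j) = if i = j then 1 else 0 := by
  classical
  by_cases h : i = j
  · subst h
    rw [if_pos rfl, Delta]
    have : Function.update F i (F i) = F := Function.update_eq_self i F
    rw [this]
    exact hjac
  · rw [if_neg h, Delta]
    apply Matrix.det_zero_of_column_eq h
    intro k
    rw [Matrix.of_apply, Matrix.of_apply, Function.update_self,
      Function.update_of_ne (Ne.symm h)]

lemma JtC (hjac : (Jm F).det = 1) : (Jm F).transpose * Cm F = 1 := by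
  classical
  ext k i
  rw [Matrix.mul_apply, Matrix.one_apply]
  have : ∑ a, (Jm F).transpose k a * Cm F a i = ∑ a, pd a (F k) * Cm F a i :=
    Finset.sum_congr rfl fun a _ => rfl
  rw [this, ← Delta_eq, Delta_F F hjac]
  by_cases h : i = k
  · subst h; simp
  · rw [if_neg h, if_neg (Ne.symm h)]

lemma CJt_entry (hjac : (Jm F).det = 1) (a b : Fin n) :
    ∑ k, Cm F a k * pd b (F k) = if a = b then 1 else 0 := by
  classical
  have h1 : Cm F * (Jm F).transpose = 1 := mul_eq_one_comm.mp (JtC F hjac)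
  have := congrFun (congrFun h1 a) b
  rw [Matrix.mul_apply, Matrix.one_apply] at this
  exact this

lemma Delta_sum {β : Type*} (s : Finset β) (i : Fin n) (h : β → MvPowerSeries (Fin n) K) :
    Delta F i (∑ b ∈ s, h b) = ∑ b ∈ s, Delta F i (h b) := by
  simp only [Delta_eq, pd_sum, Finset.sum_mul]
  rw [Finset.sum_comm]

lemma Delta_mul (i : Fin n) (f g : MvPowerSeries (Fin n) K) :
    Delta F i (f * g) = f * Delta F i g + g * Delta F i f := by
  simp only [Delta_eq, pd_mul, add_mul, Finset.sum_add_distrib, Finset.mul_sum]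
  congr 1
  · exact Finset.sum_congr rfl fun a _ => by ring
  · exact Finset.sum_congr rfl fun a _ => by ring

lemma Delta_one (i : Fin n) : Delta F i (1 : MvPowerSeries (Fin n) K) = 0 := by
  simp [Delta_eq, pd_one]

lemma Delta_zero (i : Fin n) : Delta F i (0 : MvPowerSeries (Fin n) K) = 0 := by
  simp [Delta_eq, pd_zero]

lemma vec_zero (hjac : (Jm F).det = 1) (d : Fin n → MvPowerSeries (Fin n) K)
    (hd : ∀ k, ∑ b, d b * pd b (F k) = 0) : ∀ a, d a = 0 := by
  intro a
  have h1 : ∑ k, Cm F a k * (∑ b, d b * pd b (F k)) = 0 := by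
    simp only [hd, mul_zero, Finset.sum_const_zero]
  have h2 : ∑ k, Cm F a k * (∑ b, d b * pd b (F k))
      = ∑ b, d b * (∑ k, Cm F a k * pd b (F k)) := by
    simp only [Finset.mul_sum]
    rw [Finset.sum_comm]
    exact Finset.sum_congr rfl fun b _ => Finset.sum_congr rfl fun k _ => by ring
  rw [h2] at h1
  have h3 : ∑ b, d b * (∑ k, Cm F a k * pd b (F k)) = d a := by
    rw [Finset.sum_congr rfl (fun b (_ : b ∈ Finset.univ) => by rw [CJt_entry F hjac])]
    simp [Finset.sum_ite_eq]
  rw [h3] at h1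
  exact h1

lemma dbl_symm (i j : Fin n) (g : MvPowerSeries (Fin n) K) :
    ∑ b, ∑ a, Cm F b j * (pd a (pd b g) * Cm F a i)
      = ∑ b, ∑ a, Cm F b i * (pd a (pd b g) * Cm F a j) := by
  rw [Finset.sum_comm]
  refine Finset.sum_congr rfl fun x _ => Finset.sum_congr rfl fun y _ => ?_
  rw [pd_comm]
  ring

lemma sumA (hjac : (Jm F).det = 1) (i j k : Fin n) :
    ∑ b, pd b (F k) * Delta F i (Cm F b j)
      = - ∑ b, ∑ a, Cm F b j * (pd a (pd b (F k)) * Cm F a i) := by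
  classical
  have h0 : Delta F i (∑ b, pd b (F k) * Cm F b j) = 0 := by
    rw [← Delta_eq, Delta_F F hjac]
    by_cases h : j = k
    · rw [if_pos h, Delta_one]
    · rw [if_neg h, Delta_zero]
  rw [Delta_sum] at h0
  have h1 : ∀ b : Fin n, Delta F i (pd b (F k) * Cm F b j)
      = pd b (F k) * Delta F i (Cm F b j)
        + ∑ a, Cm F b j * (pd a (pd b (F k)) * Cm F a i) := by
    intro b
    rw [Delta_mul, Delta_eq F i (pd b (F k)), Finset.mul_sum]
  rw [Finset.sum_congr rfl fun b (_ : b ∈ Finset.univ) => h1 b, Finset.sum_add_distrib] at h0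
  linear_combination h0

lemma key3 (hjac : (Jm F).det = 1) (i j b : Fin n) :
    Delta F i (Cm F b j) = Delta F j (Cm F b i) := by
  have hd : ∀ k, ∑ b, (Delta F i (Cm F b j) - Delta F j (Cm F b i)) * pd b (F k) = 0 := by
    intro k
    have e1 : ∑ b, (Delta F i (Cm F b j) - Delta F j (Cm F b i)) * pd b (F k)
        = ∑ b, pd b (F k) * Delta F i (Cm F b j)
          - ∑ b, pd b (F k) * Delta F j (Cm F b i) := by
      rw [← Finset.sum_sub_distrib]
      exact Finset.sum_congr rfl fun b _ => by ring
    rw [e1, sumA F hjac i j k, sumA F hjac j i k, dbl_symm]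
    ring
  have := vec_zero F hjac _ hd b
  linear_combination this

theorem main (hjac : (Jm F).det = 1) (i j : Fin n) (g : MvPowerSeries (Fin n) K) :
    Delta F i (Delta F j g) = Delta F j (Delta F i g) := by
  have expand : ∀ i j : Fin n, Delta F i (Delta F j g)
      = ∑ b, pd b g * Delta F i (Cm F b j)
        + ∑ b, ∑ a, Cm F b j * (pd a (pd b g) * Cm F a i) := by
    intro i j
    rw [Delta_eq F j g, Delta_sum]
    have h1 : ∀ b : Fin n, Delta F i (pd b g * Cm F b j)
        = pd b g * Delta F i (Cm F b j)
          + ∑ a, Cm F b j * (pd a (pd b g) * Cm F a i) := by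
      intro b
      rw [Delta_mul, Delta_eq F i (pd b g), Finset.mul_sum]
    rw [Finset.sum_congr rfl fun b (_ : b ∈ Finset.univ) => h1 b, Finset.sum_add_distrib]
  rw [expand i j, expand j i, dbl_symm]
  congr 1
  exact Finset.sum_congr rfl fun b _ => by rw [key3 F hjac i j b]

/-- If `Fᵢ(0) = 0` and `j(F) = det(∂_a F_b) = 1`, then
`Δᵢ(F_j) = δ_{ij}` for all `i, j`, and the derivations `Δ₁,…,Δₙ` pairwise
commute on `K[[x₁,…,xₙ]]`. -/
theorem Delta_eq_delta_and_commute
    (F : Fin n → MvPowerSeries (Fin n) K)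
    (hF0 : ∀ i, MvPowerSeries.constantCoeff (F i) = 0)
    (hjac : Matrix.det (Matrix.of fun a b => pd a (F b)) = (1 : MvPowerSeries (Fin n) K)) :
    (∀ i j, Delta F i (F j) = if i = j then 1 else 0) ∧
    (∀ i j (g : MvPowerSeries (Fin n) K),
      Delta F i (Delta F j g) = Delta F j (Delta F i g)) :=
  ⟨fun i j => Delta_F F hjac i j, fun i j g => main F hjac i j g⟩

end
end

section
/- In the ring E_1 = K[[x]]((∂^{−1})) of formal pseudodifferential operators in one variable: for any monic operator P = ∂^ℓ + p_{ℓ−1}∂^{ℓ−1} + ... with ℓ ≥ 1 and coefficients in K[[x]], there exists a unique monic operator L = ∂ + u_0 + u_{−1}∂^{−1} + ... with L^ℓ = P. -/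
/-!
STATEMENT 11: In `E₁ = K[[x]]((∂⁻¹))` (formal pseudodifferential operators in
one variable, multiplication extending `∂⁻¹ a = Σ_{k≥0} (−1)^k a^{(k)} ∂^{−1−k}`):
every monic operator `P = ∂^ℓ + p_{ℓ−1}∂^{ℓ−1} + ⋯` with `ℓ ≥ 1` has a unique
monic `ℓ`-th root `L = ∂ + u₀ + u₋₁∂⁻¹ + ⋯` with `L^ℓ = P`.
-/

noncomputable section

variable {K : Type*} [Field K] [CharZero K]

/-- elements of `E₁`: formal sums `Σ_{s∈ℤ} a_s ∂^s`, `a_s ∈ K[[x]]`,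
with support bounded above -/
abbrev E1 (K : Type*) [Field K] := ℤ → PowerSeries K

/-- the formal derivative on `K[[x]]` -/
def d1 (f : PowerSeries K) : PowerSeries K :=
  PowerSeries.mk fun μ => ((μ + 1 : ℕ) : K) * PowerSeries.coeff (R := K) (μ + 1) f

/-- generalized binomial coefficient `C(s,t) = s(s−1)⋯(s−t+1)/t!`, `s ∈ ℤ`;
`C(−1,t) = (−1)^t` recovers `∂⁻¹ a = Σ (−1)^k a^{(k)} ∂^{−1−k}`. -/
def zchoose (s : ℤ) (t : ℕ) : K :=
  (∏ r ∈ Finset.range t, ((s : K) - r)) * ((t.factorial : K))⁻¹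

/-- the product in `E₁`: `(Σ a_i ∂^i)(Σ b_l ∂^l)` with
`∂^i b = Σ_{t≥0} C(i,t) b^{(t)} ∂^{i−t}`, computed coefficientwise -/
def mulE1 (P Q : E1 K) : E1 K :=
  fun s => PowerSeries.mk fun μ =>
    ∑ᶠ (i : ℤ) (t : ℕ),
      zchoose (K := K) i t * PowerSeries.coeff (R := K) μ (P i * d1^[t] (Q (s - i + t)))

open Classical in
/-- the identity operator of `E₁` -/
def oneE1 : E1 K := fun s => if s = 0 then 1 else 0

/-- powers in `E₁` -/
def powE1 (L : E1 K) : ℕ → E1 K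
  | 0 => oneE1
  | q + 1 => mulE1 L (powE1 L q)


set_option linter.unusedSectionVars false
set_option maxHeartbeats 1000000

lemma d1_zero : d1 (0 : PowerSeries K) = 0 := by
  ext μ; simp [d1, PowerSeries.coeff_mk]

lemma d1_iter_zero (t : ℕ) : d1^[t] (0 : PowerSeries K) = 0 := by
  induction t with
  | zero => rfl
  | succ t ih => rw [Function.iterate_succ_apply', ih, d1_zero]

lemma zchoose_zero (i : ℤ) : zchoose (K := K) i 0 = 1 := by
  simp [zchoose]

lemma mulE1_eq_sum (L Q : E1 K) (s : ℤ) (S : Finset (ℤ × ℕ))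
    (hS : ∀ i : ℤ, ∀ t : ℕ, L i * d1^[t] (Q (s - i + t)) ≠ 0 → (i, t) ∈ S) :
    mulE1 L Q s = ∑ p ∈ S, zchoose (K := K) p.1 p.2 • (L p.1 * d1^[p.2] (Q (s - p.1 + p.2))) := by
  ext μ
  rw [mulE1, PowerSeries.coeff_mk]
  have hterm : ∀ i t, zchoose (K := K) i t * PowerSeries.coeff (R := K) μ (L i * d1^[t] (Q (s - i + t))) ≠ 0 → (i, t) ∈ S := by
    intro i t h
    apply hS
    intro h0
    rw [h0] at h; simp at h
  have hinner : ∀ i : ℤ, (∑ᶠ t : ℕ, zchoose (K := K) i t * PowerSeries.coeff (R := K) μ (L i * d1^[t] (Q (s - i + t))))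
      = ∑ t ∈ S.image Prod.snd, zchoose (K := K) i t * PowerSeries.coeff (R := K) μ (L i * d1^[t] (Q (s - i + t))) := by
    intro i
    apply finsum_eq_sum_of_support_subset
    intro t ht
    simp only [Function.mem_support] at ht
    simpa using Finset.mem_image_of_mem Prod.snd (hterm i t ht)
  calc (∑ᶠ (i : ℤ) (t : ℕ), zchoose (K := K) i t * PowerSeries.coeff (R := K) μ (L i * d1^[t] (Q (s - i + t))))
      = ∑ i ∈ S.image Prod.fst, ∑ t ∈ S.image Prod.snd,
          zchoose (K := K) i t * PowerSeries.coeff (R := K) μ (L i * d1^[t] (Q (s - i + t))) := by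
        rw [finsum_congr hinner]
        apply finsum_eq_sum_of_support_subset
        intro i hi
        simp only [Function.mem_support] at hi
        obtain ⟨t, -, ht⟩ := Finset.exists_ne_zero_of_sum_ne_zero hi
        simpa using Finset.mem_image_of_mem Prod.fst (hterm i t ht)
    _ = ∑ p ∈ (S.image Prod.fst) ×ˢ (S.image Prod.snd),
          zchoose (K := K) p.1 p.2 * PowerSeries.coeff (R := K) μ (L p.1 * d1^[p.2] (Q (s - p.1 + p.2))) := by
        rw [Finset.sum_product]
    _ = ∑ p ∈ S, zchoose (K := K) p.1 p.2 * PowerSeries.coeff (R := K) μ (L p.1 * d1^[p.2] (Q (s - p.1 + p.2))) := by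
        apply (Finset.sum_subset _ _).symm
        · intro p hp
          exact Finset.mem_product.mpr ⟨Finset.mem_image_of_mem _ hp, Finset.mem_image_of_mem _ hp⟩
        · intro p _ hp
          by_contra h
          exact hp (hterm p.1 p.2 h)
    _ = PowerSeries.coeff (R := K) μ (∑ p ∈ S, zchoose (K := K) p.1 p.2 • (L p.1 * d1^[p.2] (Q (s - p.1 + p.2)))) := by
        rw [map_sum]
        apply Finset.sum_congr rfl
        intro p _
        rw [PowerSeries.coeff_smul, smul_eq_mul]

lemma nz_bounds {L Q : E1 K} {q : ℕ} (hL0 : ∀ s : ℤ, 1 < s → L s = 0)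
    (hQ0 : ∀ s : ℤ, (q : ℤ) < s → Q s = 0) {i j : ℤ} {t : ℕ}
    (h : L i * d1^[t] (Q j) ≠ 0) : i ≤ 1 ∧ j ≤ (q : ℤ) := by
  constructor
  · by_contra hi; push_neg at hi; rw [hL0 i hi, zero_mul] at h; exact h rfl
  · by_contra hj; push_neg at hj; rw [hQ0 j hj, d1_iter_zero, mul_zero] at h; exact h rfl

lemma powE1_supp (L : E1 K) (hL1 : L 1 = 1) (hL0 : ∀ s : ℤ, 1 < s → L s = 0) (q : ℕ) :
    (∀ s : ℤ, (q : ℤ) < s → powE1 L q s = 0) ∧ powE1 L q (q : ℤ) = 1 := by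
  induction q with
  | zero =>
    constructor
    · intro s hs
      show oneE1 s = 0
      rw [oneE1, if_neg (by omega)]
    · show oneE1 (0:ℤ) = 1
      rw [oneE1, if_pos rfl]
  | succ q ih =>
    obtain ⟨ih0, ih1⟩ := ih
    constructor
    · intro s hs
      show mulE1 L (powE1 L q) s = 0
      rw [mulE1_eq_sum L (powE1 L q) s ∅ ?_, Finset.sum_empty]
      intro i t h
      obtain ⟨h1, h2⟩ := nz_bounds hL0 ih0 h
      exfalso; push_cast at hs h2 ⊢; omega
    · show mulE1 L (powE1 L q) ((q:ℤ)+1) = 1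
      rw [mulE1_eq_sum L (powE1 L q) ((q:ℤ)+1) {((1:ℤ),(0:ℕ))} ?_]
      · have e : (q:ℤ) + 1 - 1 + ((0:ℕ):ℤ) = (q:ℤ) := by push_cast; ring
        rw [Finset.sum_singleton]
        simp only [e, zchoose_zero, one_smul, Function.iterate_zero, id_eq, hL1, ih1, one_mul]
      · intro i t h
        obtain ⟨h1, h2⟩ := nz_bounds hL0 ih0 h
        have : i = 1 ∧ t = 0 := by omega
        simp [this.1, this.2]

lemma key (N : ℕ) (hN : 1 ≤ N) (L L' : E1 K)
    (hL1 : L 1 = 1) (hL0 : ∀ s : ℤ, 1 < s → L s = 0)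
    (hL1' : L' 1 = 1) (hL0' : ∀ s : ℤ, 1 < s → L' s = 0)
    (heq : ∀ s : ℤ, 1 - (N : ℤ) < s → L s = L' s) (q : ℕ) :
    (∀ m : ℤ, (q : ℤ) - N < m → powE1 L q m = powE1 L' q m) ∧
    powE1 L q ((q : ℤ) - N) - powE1 L' q ((q : ℤ) - N)
      = (q : K) • (L (1 - (N : ℤ)) - L' (1 - (N : ℤ))) := by
  induction q with
  | zero =>
    refine ⟨fun m _ => rfl, ?_⟩
    simp only [Nat.cast_zero, zero_smul, zero_sub]
    show oneE1 (-(N:ℤ)) - oneE1 (-(N:ℤ)) = 0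
    exact sub_self _
  | succ q ih =>
    obtain ⟨iha, ihb⟩ := ih
    obtain ⟨hQ0, hQ1⟩ := powE1_supp L hL1 hL0 q
    obtain ⟨hQ0', hQ1'⟩ := powE1_supp L' hL1' hL0' q
    set Q := powE1 L q with hQdef
    set Q' := powE1 L' q with hQdef'
    set S : Finset (ℤ × ℕ) := Finset.Icc (1 - (N : ℤ)) 1 ×ˢ Finset.range (N + 1) with hSdef
    have hmem : ∀ i : ℤ, ∀ t : ℕ, 1 - (N:ℤ) ≤ i → i ≤ 1 → t < N + 1 → (i, t) ∈ S := by
      intro i t h1 h2 h3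
      exact Finset.mem_product.mpr ⟨Finset.mem_Icc.mpr ⟨h1, h2⟩, Finset.mem_range.mpr h3⟩
    have hmem' : ∀ p : ℤ × ℕ, p ∈ S → 1 - (N:ℤ) ≤ p.1 ∧ p.1 ≤ 1 ∧ p.2 < N + 1 := by
      intro p hp
      obtain ⟨h1, h2⟩ := Finset.mem_product.mp hp
      exact ⟨(Finset.mem_Icc.mp h1).1, (Finset.mem_Icc.mp h1).2, Finset.mem_range.mp h2⟩
    -- expansion valid at any level s > q - N  (i.e. s ≥ q+1-N)
    have hexp : ∀ s : ℤ, (q : ℤ) - N < s →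
        powE1 L (q + 1) s = ∑ p ∈ S, zchoose (K := K) p.1 p.2 • (L p.1 * d1^[p.2] (Q (s - p.1 + p.2))) := by
      intro s hs
      show mulE1 L Q s = _
      apply mulE1_eq_sum
      intro i t h
      obtain ⟨h1, h2⟩ := nz_bounds hL0 hQ0 h
      exact hmem i t (by omega) h1 (by omega)
    have hexp' : ∀ s : ℤ, (q : ℤ) - N < s →
        powE1 L' (q + 1) s = ∑ p ∈ S, zchoose (K := K) p.1 p.2 • (L' p.1 * d1^[p.2] (Q' (s - p.1 + p.2))) := by
      intro s hs
      show mulE1 L' Q' s = _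
      apply mulE1_eq_sum
      intro i t h
      obtain ⟨h1, h2⟩ := nz_bounds hL0' hQ0' h
      exact hmem i t (by omega) h1 (by omega)
    constructor
    · -- part a
      intro m hm
      have hm' : (q : ℤ) - N < m := by push_cast at hm; omega
      rw [hexp m (by omega), hexp' m (by omega)]
      apply Finset.sum_congr rfl
      intro p hp
      obtain ⟨hp1, hp2, hp3⟩ := hmem' p hp
      by_cases hidx : (q : ℤ) < m - p.1 + p.2
      · rw [hQ0 _ hidx, hQ0' _ hidx, d1_iter_zero, mul_zero, mul_zero]
      · push_neg at hidx
        have hLp : L p.1 = L' p.1 := heq p.1 (by push_cast at hm; omega)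
        have hQp : Q (m - p.1 + p.2) = Q' (m - p.1 + p.2) := iha _ (by push_cast at hm; omega)
        rw [hLp, hQp]
    · -- part b
      set s : ℤ := ((q : ℕ) + 1 : ℕ) - (N : ℤ) with hsdef
      have hs : s = (q : ℤ) + 1 - N := by push_cast [hsdef]; ring
      have hsgt : (q : ℤ) - N < s := by omega
      rw [hexp s hsgt, hexp' s hsgt, ← Finset.sum_sub_distrib]
      set p₀ : ℤ × ℕ := (1 - (N : ℤ), 0) with hp₀
      set p₁ : ℤ × ℕ := ((1 : ℤ), 0) with hp₁
      have hne : p₀ ≠ p₁ := by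
        simp only [hp₀, hp₁, Prod.mk.injEq, ne_eq]
        intro h
        omega
      have hsub : ({p₀, p₁} : Finset (ℤ × ℕ)) ⊆ S := by
        intro p hp
        rcases Finset.mem_insert.mp hp with h | h
        · rw [h]; exact hmem (1 - (N:ℤ)) 0 (by omega) (by omega) (by omega)
        · rw [Finset.mem_singleton.mp h]; exact hmem 1 0 (by omega) (by omega) (by omega)
      rw [← Finset.sum_subset hsub ?_]
      · -- evaluate the two terms
        rw [Finset.sum_pair hne]
        have e₀ : s - p₀.1 + (p₀.2 : ℤ) = (q : ℤ) := by simp only [hp₀]; omega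
        have e₁ : s - p₁.1 + (p₁.2 : ℤ) = (q : ℤ) - N := by simp only [hp₁]; omega
        simp only [hp₀, hp₁] at e₀ e₁ ⊢
        rw [e₀, e₁]
        simp only [Function.iterate_zero, id_eq, zchoose_zero, one_smul, hQ1, hQ1', mul_one,
          hL1, hL1', one_mul]
        rw [ihb]
        push_cast
        rw [add_smul, one_smul]
        ring_nf
      · -- other terms vanish
        intro p hp hnp
        obtain ⟨hp1, hp2, hp3⟩ := hmem' p hp
        have hnp0 : p ≠ p₀ := by intro h; exact hnp (by rw [h]; exact Finset.mem_insert_self _ _)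
        have hnp1 : p ≠ p₁ := by
          intro h; exact hnp (by rw [h]; exact Finset.mem_insert_of_mem (Finset.mem_singleton_self _))
        by_cases hidx : (q : ℤ) < s - p.1 + p.2
        · rw [hQ0 _ hidx, hQ0' _ hidx, d1_iter_zero, mul_zero, mul_zero, sub_self]
        · push_neg at hidx
          -- s - p.1 + p.2 ≤ q, so p.1 ≥ 1 - N + p.2
          have hge : 1 - (N : ℤ) + p.2 ≤ p.1 := by omega
          have hp1' : 1 - (N : ℤ) < p.1 := by
            rcases lt_or_eq_of_le hp1 with h | h
            · exact h
            · exfalso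
              have : p.2 = 0 := by omega
              exact hnp0 (Prod.ext h.symm this)
          have hLp : L p.1 = L' p.1 := heq p.1 hp1'
          have hQp : Q (s - p.1 + p.2) = Q' (s - p.1 + p.2) := by
            apply iha
            rcases lt_or_eq_of_le hp2 with h | h
            · omega
            · -- p.1 = 1 : need p.2 ≥ 1, else p = p₁
              have hp2pos : 0 < p.2 := by
                by_contra hz
                exact hnp1 (Prod.ext h (by show p.2 = 0; omega))
              omega
          rw [hLp, hQp, sub_self]

open Classical in
/-- successive approximations to the `ℓ`-th root of `P` -/
def approxE1 (P : E1 K) (ℓ : ℕ) : ℕ → E1 K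
  | 0 => fun s => if s = 1 then 1 else 0
  | n + 1 => fun s =>
      if s = -(n : ℤ) then
        (ℓ : K)⁻¹ • (P ((ℓ : ℤ) - (n + 1)) - powE1 (approxE1 P ℓ n) ℓ ((ℓ : ℤ) - (n + 1)))
      else approxE1 P ℓ n s

lemma approxE1_top (P : E1 K) (ℓ : ℕ) (n : ℕ) :
    approxE1 P ℓ n 1 = 1 ∧ ∀ s : ℤ, 1 < s → approxE1 P ℓ n s = 0 := by
  induction n with
  | zero =>
    constructor
    · show (if (1:ℤ) = 1 then (1:PowerSeries K) else 0) = 1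
      rw [if_pos rfl]
    · intro s hs
      show (if s = 1 then (1:PowerSeries K) else 0) = 0
      rw [if_neg (show ¬ s = 1 by omega)]
  | succ n ih =>
    constructor
    · simp only [approxE1]; rw [if_neg (show ¬ (1:ℤ) = -(n:ℤ) by omega)]; exact ih.1
    · intro s hs; simp only [approxE1]; rw [if_neg (show ¬ s = -(n:ℤ) by omega)]; exact ih.2 s hs

lemma approxE1_zero_at (P : E1 K) (ℓ : ℕ) (k n : ℕ) (h : k ≤ n) :
    approxE1 P ℓ k (-(n : ℤ)) = 0 := by
  induction k with
  | zero =>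
    show (if -(n:ℤ) = 1 then (1:PowerSeries K) else 0) = 0
    rw [if_neg (show ¬ -(n:ℤ) = 1 by omega)]
  | succ k ih =>
    simp only [approxE1]
    rw [if_neg (show ¬ -(n:ℤ) = -(k:ℤ) by omega)]
    exact ih (by omega)

lemma approxE1_stable (P : E1 K) (ℓ : ℕ) (n m : ℕ) (s : ℤ) (h1 : 1 - s ≤ (n : ℤ))
    (h2 : n ≤ m) : approxE1 P ℓ m s = approxE1 P ℓ n s := by
  induction m with
  | zero => rw [Nat.le_zero.mp h2]
  | succ m ih =>
    rcases Nat.lt_or_ge n (m+1) with h | h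
    · simp only [approxE1]
      rw [if_neg (show ¬ s = -(m:ℤ) by omega)]
      exact ih (by omega)
    · rw [Nat.le_antisymm h2 h]


/-- Every monic `P = ∂^ℓ + p_{ℓ−1}∂^{ℓ−1} + ⋯ ∈ E₁` with
`ℓ ≥ 1` has a unique monic root `L = ∂ + u₀ + u₋₁∂⁻¹ + ⋯` with `L^ℓ = P`. -/
theorem exists_unique_monic_root (ℓ : ℕ) (hℓ : 1 ≤ ℓ) (P : E1 K)
    (hmonic : P (ℓ : ℤ) = 1) (hsupp : ∀ s : ℤ, (ℓ : ℤ) < s → P s = 0) :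
    ∃! L : E1 K, ((L 1 = 1 ∧ ∀ s : ℤ, 1 < s → L s = 0) ∧ powE1 L ℓ = P) := by
  have hℓK : (ℓ : K) ≠ 0 := Nat.cast_ne_zero.mpr (by omega)
  -- uniqueness part (any two roots agree)
  have uniq : ∀ M M' : E1 K, (M 1 = 1 ∧ ∀ s : ℤ, 1 < s → M s = 0) → powE1 M ℓ = P →
      (M' 1 = 1 ∧ ∀ s : ℤ, 1 < s → M' s = 0) → powE1 M' ℓ = P → M = M' := by
    intro M M' hM hMP hM' hMP'
    suffices h : ∀ n : ℕ, ∀ s : ℤ, 1 - (n : ℤ) < s → M s = M' s by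
      funext s
      exact h ((1 - s).toNat + 1) s (by omega)
    intro n
    induction n with
    | zero => intro s hs; rw [hM.2 s (by omega), hM'.2 s (by omega)]
    | succ n ih =>
      intro s hs
      rcases lt_or_eq_of_le (show 1 - (n:ℤ) ≤ s by push_cast at hs; omega) with h | h
      · exact ih s h
      · rcases Nat.eq_zero_or_pos n with hn | hn
        · subst hn
          have : s = 1 := by omega
          rw [this, hM.1, hM'.1]
        · have hk := (key n hn M M' hM.1 hM.2 hM'.1 hM'.2 ih ℓ).2
          rw [hMP, hMP', sub_self] at hk
          have hd : M (1 - (n:ℤ)) - M' (1 - (n:ℤ)) = 0 := by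
            have := congrArg (fun z => (ℓ : K)⁻¹ • z) hk.symm
            simpa [smul_smul, inv_mul_cancel₀ hℓK] using this
          rw [← h]
          linear_combination hd
  -- existence
  set L : E1 K := fun s => approxE1 P ℓ (1 - s).toNat s with hLdef
  have hLagree : ∀ n : ℕ, ∀ s : ℤ, 1 - (n : ℤ) < s → L s = approxE1 P ℓ n s := by
    intro n s hs
    rw [hLdef]
    exact (approxE1_stable P ℓ (1 - s).toNat n s (Int.self_le_toNat _) (by omega)).symm
  have hL1 : L 1 = 1 := by
    rw [hLagree 1 1 (by omega)]
    exact (approxE1_top P ℓ 1).1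
  have hL0 : ∀ s : ℤ, 1 < s → L s = 0 := by
    intro s hs
    rw [hLagree 0 s (by omega)]
    exact (approxE1_top P ℓ 0).2 s hs
  -- the approximations compute P in a range
  have hC : ∀ n : ℕ, ∀ s : ℤ, (ℓ : ℤ) - 1 - n < s → powE1 (approxE1 P ℓ n) ℓ s = P s := by
    intro n
    induction n with
    | zero =>
      intro s hs
      obtain ⟨hs0, hs1⟩ := powE1_supp (approxE1 P ℓ 0) (approxE1_top P ℓ 0).1 (approxE1_top P ℓ 0).2 ℓ
      rcases lt_or_eq_of_le (show (ℓ:ℤ) ≤ s by omega) with h | h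
      · rw [hs0 s h, hsupp s h]
      · rw [← h, hs1, hmonic]
    | succ n ih =>
      intro s hs
      have htop := approxE1_top P ℓ n
      have htop' := approxE1_top P ℓ (n+1)
      have heq : ∀ s : ℤ, 1 - ((n+1 : ℕ) : ℤ) < s → approxE1 P ℓ (n+1) s = approxE1 P ℓ n s := by
        intro s hs
        simp only [approxE1]
        rw [if_neg (show ¬ s = -(n:ℤ) by push_cast at hs; omega)]
      have hk := key (n+1) (by omega) (approxE1 P ℓ (n+1)) (approxE1 P ℓ n)
        htop'.1 htop'.2 htop.1 htop.2 heq ℓ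
      rcases lt_or_eq_of_le (show (ℓ:ℤ) - ((n+1:ℕ):ℤ) ≤ s by push_cast at hs ⊢; omega) with h | h
      · rw [hk.1 s h]
        exact ih s (by push_cast at h ⊢; omega)
      · -- s = ℓ - (n+1)
        have hb := hk.2
        have e1 : (1 : ℤ) - ((n+1:ℕ):ℤ) = -(n:ℤ) := by push_cast; ring
        have e2 : ((ℓ:ℤ) - ((n+1:ℕ):ℤ)) = (ℓ:ℤ) - ((n:ℤ)+1) := by push_cast; ring
        rw [e1] at hb
        have hA' : approxE1 P ℓ (n+1) (-(n:ℤ))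
            = (ℓ : K)⁻¹ • (P ((ℓ:ℤ) - ((n:ℤ)+1)) - powE1 (approxE1 P ℓ n) ℓ ((ℓ:ℤ) - ((n:ℤ)+1))) := by
          simp [approxE1]
        have hA : approxE1 P ℓ n (-(n:ℤ)) = 0 := approxE1_zero_at P ℓ n n le_rfl
        rw [hA', hA, sub_zero, smul_smul, mul_inv_cancel₀ hℓK, one_smul] at hb
        rw [← h, e2]
        rw [e2] at hb
        linear_combination hb
  have hLP : powE1 L ℓ = P := by
    funext s
    set n : ℕ := ((ℓ:ℤ) + 1 - s).toNat + 1 with hn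
    have hn1 : 1 ≤ n := by omega
    have hns : (ℓ : ℤ) - (n:ℤ) < s := by
      rw [hn]; push_cast; omega
    have htop := approxE1_top P ℓ n
    have hk := key n hn1 L (approxE1 P ℓ n) hL1 hL0 htop.1 htop.2 (hLagree n) ℓ
    rw [hk.1 s hns]
    exact hC n s (by omega)
  exact ⟨L, ⟨⟨hL1, hL0⟩, hLP⟩, fun y hy => uniq y L ⟨hy.1.1, hy.1.2⟩ hy.2 ⟨hL1, hL0⟩ hLP⟩

end
end
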